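/- Let σ, n > 0 be constants with n > √σ, and let m ≥ 1 be an integer. Define f : (0,∞) → ℝ by f(k) = J_m(k·n/√σ)·J_m'(k) − √σ·n·J_m'(k·n/√σ)·J_m(k), where J_m' denotes the derivative of J_m. Suppose 0 < a < b satisfy J_m(a) = J_m(b) = 0, J_m(r) ≠ 0 for all r ∈ (a,b), and J_m(r) > 0 for all r ∈ (0, √σ·b/n]. Then f has at least one root in the open interval (√σ·a/n, √σ·b/n). -/

import Mathlib

open Set

noncomputable section

/-- The Bessel function of the first kind of order `ν`:
`J_ν(x) = Σ_{s=0}^∞ ((−1)^s / (s!·Γ(ν+s+1)))·(x/2)^{2s+ν}`. -/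
def besselJ (ν : ℝ) (x : ℝ) : ℝ :=
  ∑' s : ℕ, ((-1 : ℝ) ^ s / ((s.factorial : ℝ) * Real.Gamma (ν + (s : ℝ) + 1)))
    * (x / 2) ^ (2 * (s : ℝ) + ν)

def bc (m s : ℕ) : ℝ :=
  (-1) ^ s / ((s.factorial : ℝ) * ((m + s).factorial : ℝ) * 2 ^ (2 * s + m))

def bd (m s : ℕ) : ℝ := bc m s * ((2 * s + m : ℕ) : ℝ)

def be (m s : ℕ) : ℝ := bd m s * ((2 * s + m - 1 : ℕ) : ℝ)

def bF (m : ℕ) (x : ℝ) : ℝ := ∑' s : ℕ, bc m s * x ^ (2 * s + m)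

def bF1 (m : ℕ) (x : ℝ) : ℝ := ∑' s : ℕ, bd m s * x ^ (2 * s + m - 1)

def bF2 (m : ℕ) (x : ℝ) : ℝ := ∑' s : ℕ, be m s * x ^ (2 * s + m - 2)

def bu (m : ℕ) (M : ℝ) (s : ℕ) : ℝ :=
  |bc m s| * ((2 * s + m : ℕ) : ℝ) ^ 2 * M ^ (2 * s + m + 2)

lemma nat_le_aux (m s : ℕ) : 2 * s + m ≤ (m + 2) * 2 ^ s := by
  induction s with
  | zero => omega
  | succ s ih =>
      have h2 : 2 ≤ (m + 2) * 2 ^ s := by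
        have : (1:ℕ) ≤ 2 ^ s := Nat.one_le_two_pow
        nlinarith
      have : (m + 2) * 2 ^ (s + 1) = (m + 2) * 2 ^ s + (m + 2) * 2 ^ s := by ring
      omega

lemma abs_bc (m s : ℕ) :
    |bc m s| = 1 / ((s.factorial : ℝ) * ((m + s).factorial : ℝ) * 2 ^ (2 * s + m)) := by
  unfold bc
  rw [abs_div, abs_pow, abs_neg, abs_one, one_pow]
  congr 1
  have h1 : (0:ℝ) < (s.factorial : ℝ) * ((m + s).factorial : ℝ) * 2 ^ (2 * s + m) := by
    positivity
  exact abs_of_pos h1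

lemma abs_bc_le (m s : ℕ) : |bc m s| ≤ 1 / (s.factorial : ℝ) := by
  rw [abs_bc]
  apply one_div_le_one_div_of_le
  · positivity
  · have h1 : (1:ℝ) ≤ ((m + s).factorial : ℝ) := by exact_mod_cast (m+s).factorial_pos
    have h2 : (1:ℝ) ≤ (2:ℝ) ^ (2 * s + m) := one_le_pow₀ (by norm_num)
    have h3 : (0:ℝ) < (s.factorial : ℝ) := by exact_mod_cast s.factorial_pos
    nlinarith [mul_le_mul h1 h2 (by norm_num : (0:ℝ) ≤ 1) (le_trans zero_le_one h1)]

lemma summable_bu (m : ℕ) (M : ℝ) (hM : 1 ≤ M) : Summable (bu m M) := by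
  have hM0 : (0:ℝ) ≤ M := le_trans zero_le_one hM
  have hsum : Summable (fun s : ℕ => ((m + 2 : ℝ) ^ 2 * M ^ (m + 2)) *
      ((4 * M ^ 2) ^ s / (s.factorial : ℝ))) :=
    (Real.summable_pow_div_factorial (4 * M ^ 2)).mul_left _
  apply Summable.of_nonneg_of_le (fun s => by unfold bu; positivity) _ hsum
  intro s
  have h1 : |bc m s| ≤ 1 / (s.factorial : ℝ) := abs_bc_le m s
  have h2 : ((2 * s + m : ℕ) : ℝ) ^ 2 ≤ (m + 2 : ℝ) ^ 2 * 4 ^ s := by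
    have hn : ((2 * s + m : ℕ) : ℝ) ≤ ((m + 2) * 2 ^ s : ℕ) := by
      exact_mod_cast nat_le_aux m s
    have hpos : (0:ℝ) ≤ ((2 * s + m : ℕ) : ℝ) := Nat.cast_nonneg _
    have := mul_self_le_mul_self hpos hn
    push_cast at this ⊢
    calc ((2:ℝ) * s + m) ^ 2 ≤ (((m:ℝ) + 2) * 2 ^ s) ^ 2 := by nlinarith
    _ = (m + 2:ℝ) ^ 2 * 4 ^ s := by
        rw [mul_pow]
        congr 1
        rw [← pow_mul, mul_comm s 2, pow_mul]
        norm_num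
  have h3 : M ^ (2 * s + m + 2) = M ^ (m + 2) * (M ^ 2) ^ s := by
    rw [← pow_mul, ← pow_add]
    ring_nf
  calc bu m M s ≤ (1 / (s.factorial : ℝ)) * ((m + 2 : ℝ) ^ 2 * 4 ^ s) *
        (M ^ (m + 2) * (M ^ 2) ^ s) := by
        unfold bu
        rw [h3]
        apply mul_le_mul (mul_le_mul h1 h2 (by positivity) (by positivity)) le_rfl
          (by positivity) (by positivity)
  _ = ((m + 2 : ℝ) ^ 2 * M ^ (m + 2)) * ((4 * M ^ 2) ^ s / (s.factorial : ℝ)) := by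
      rw [mul_pow]
      field_simp

lemma bterm_le (m : ℕ) (C : ℕ → ℝ)
    (hC : ∀ s, |C s| ≤ |bc m s| * ((2 * s + m : ℕ) : ℝ) ^ 2) (E : ℕ → ℕ)
    (hE : ∀ s, E s ≤ 2 * s + m + 2) (M y : ℝ) (hM : 1 ≤ M) (hy : |y| ≤ M) (s : ℕ) :
    |C s * y ^ E s| ≤ bu m M s := by
  rw [abs_mul, abs_pow]
  have h1 : |y| ^ E s ≤ M ^ E s := pow_le_pow_left₀ (abs_nonneg _) hy _
  have h2 : M ^ E s ≤ M ^ (2 * s + m + 2) := pow_le_pow_right₀ hM (hE s)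
  calc |C s| * |y| ^ E s ≤ (|bc m s| * ((2 * s + m : ℕ) : ℝ) ^ 2) * M ^ (2 * s + m + 2) := by
        apply mul_le_mul (hC s) (le_trans h1 h2) (by positivity) (by positivity)
  _ = bu m M s := rfl

lemma bsum (m : ℕ) (C : ℕ → ℝ)
    (hC : ∀ s, |C s| ≤ |bc m s| * ((2 * s + m : ℕ) : ℝ) ^ 2) (E : ℕ → ℕ)
    (hE : ∀ s, E s ≤ 2 * s + m + 2) (y : ℝ) : Summable (fun s => C s * y ^ E s) := by
  apply Summable.of_norm_bounded (summable_bu m _ (le_max_right _ _))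
  exact fun s => bterm_le m C hC E hE _ y (le_max_right _ _) (le_max_left _ _) s


lemma coeff_bc (m : ℕ) (hm : 1 ≤ m) (s : ℕ) :
    |bc m s| ≤ |bc m s| * ((2 * s + m : ℕ) : ℝ) ^ 2 := by
  have h : (1:ℝ) ≤ ((2 * s + m : ℕ) : ℝ) ^ 2 := by
    have : (1:ℕ) ≤ 2 * s + m := by omega
    have h2 : (1:ℝ) ≤ ((2 * s + m : ℕ) : ℝ) := by exact_mod_cast this
    nlinarith
  exact le_mul_of_one_le_right (abs_nonneg _) h

lemma coeff_bd (m : ℕ) (hm : 1 ≤ m) (s : ℕ) :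
    |bd m s| ≤ |bc m s| * ((2 * s + m : ℕ) : ℝ) ^ 2 := by
  unfold bd
  rw [abs_mul, Nat.abs_cast]
  have h1 : (1:ℝ) ≤ ((2 * s + m : ℕ) : ℝ) := by
    have : (1:ℕ) ≤ 2 * s + m := by omega
    exact_mod_cast this
  have := abs_nonneg (bc m s)
  exact mul_le_mul_of_nonneg_left (by nlinarith) this

lemma coeff_be (m : ℕ) (hm : 1 ≤ m) (s : ℕ) :
    |be m s| ≤ |bc m s| * ((2 * s + m : ℕ) : ℝ) ^ 2 := by
  unfold be bd
  rw [abs_mul, abs_mul, Nat.abs_cast, Nat.abs_cast]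
  have h1 : ((2 * s + m - 1 : ℕ) : ℝ) ≤ ((2 * s + m : ℕ) : ℝ) := by
    exact_mod_cast Nat.sub_le _ _
  have h0 : (0:ℝ) ≤ ((2 * s + m : ℕ) : ℝ) := Nat.cast_nonneg _
  have h2 : (0:ℝ) ≤ ((2 * s + m - 1 : ℕ) : ℝ) := Nat.cast_nonneg _
  have := abs_nonneg (bc m s)
  calc |bc m s| * ((2*s+m:ℕ):ℝ) * ((2*s+m-1:ℕ):ℝ)
      ≤ |bc m s| * ((2*s+m:ℕ):ℝ) * ((2*s+m:ℕ):ℝ) := by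
        apply mul_le_mul_of_nonneg_left h1 (by positivity)
  _ = |bc m s| * ((2*s+m:ℕ):ℝ) ^ 2 := by ring

lemma hasDerivAt_bF (m : ℕ) (hm : 1 ≤ m) (x : ℝ) : HasDerivAt (bF m) (bF1 m x) x := by
  have key : HasDerivAt (fun z => ∑' s : ℕ, bc m s * z ^ (2 * s + m))
      (∑' s : ℕ, bd m s * x ^ (2 * s + m - 1)) x := by
    have h := hasDerivAt_tsum_of_isPreconnected
      (u := bu m (|x| + 1))
      (t := Metric.ball (0:ℝ) (|x| + 1))
      (g := fun s z => bc m s * z ^ (2 * s + m))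
      (g' := fun s z => bd m s * z ^ (2 * s + m - 1))
      (summable_bu m _ (le_add_of_nonneg_left (abs_nonneg x)))
      Metric.isOpen_ball (convex_ball _ _).isPreconnected
      (fun s y _ => by
        show HasDerivAt (fun z => bc m s * z ^ (2 * s + m)) (bd m s * y ^ (2 * s + m - 1)) y
        have := (hasDerivAt_pow (2 * s + m) y).const_mul (bc m s)
        have heq : bd m s * y ^ (2 * s + m - 1)
            = bc m s * (((2 * s + m : ℕ) : ℝ) * y ^ (2 * s + m - 1)) := by
          unfold bd; ring
        rw [heq]
        exact this)
      (fun s y hy => by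
        have hy' : |y| ≤ |x| + 1 := by
          have := mem_ball_zero_iff.mp hy
          rw [Real.norm_eq_abs] at this
          linarith
        simpa [abs_mul, abs_pow] using bterm_le m (bd m) (coeff_bd m hm) (fun s => 2 * s + m - 1)
          (fun s => le_trans (Nat.sub_le _ _) (Nat.le_add_right _ 2)) (|x| + 1) y
          (le_add_of_nonneg_left (abs_nonneg x)) hy' s)
      (y₀ := x) (mem_ball_zero_iff.mpr (by rw [Real.norm_eq_abs]; linarith [abs_nonneg x]))
      (bsum m (bc m) (coeff_bc m hm) (fun s => 2 * s + m) (fun s => Nat.le_add_right _ 2) x)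
      (y := x) (mem_ball_zero_iff.mpr (by rw [Real.norm_eq_abs]; linarith [abs_nonneg x]))
    exact h
  exact key

lemma hasDerivAt_bF1 (m : ℕ) (hm : 1 ≤ m) (x : ℝ) : HasDerivAt (bF1 m) (bF2 m x) x := by
  have key : HasDerivAt (fun z => ∑' s : ℕ, bd m s * z ^ (2 * s + m - 1))
      (∑' s : ℕ, be m s * x ^ (2 * s + m - 2)) x := by
    have h := hasDerivAt_tsum_of_isPreconnected
      (u := bu m (|x| + 1))
      (t := Metric.ball (0:ℝ) (|x| + 1))
      (g := fun s z => bd m s * z ^ (2 * s + m - 1))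
      (g' := fun s z => be m s * z ^ (2 * s + m - 2))
      (summable_bu m _ (le_add_of_nonneg_left (abs_nonneg x)))
      Metric.isOpen_ball (convex_ball _ _).isPreconnected
      (fun s y _ => by
        show HasDerivAt (fun z => bd m s * z ^ (2 * s + m - 1)) (be m s * y ^ (2 * s + m - 2)) y
        have := (hasDerivAt_pow (2 * s + m - 1) y).const_mul (bd m s)
        have heq : be m s * y ^ (2 * s + m - 2)
            = bd m s * (((2 * s + m - 1 : ℕ) : ℝ) * y ^ (2 * s + m - 1 - 1)) := by
          unfold be
          have : 2 * s + m - 1 - 1 = 2 * s + m - 2 := by omega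
          rw [this]; ring
        rw [heq]
        exact this)
      (fun s y hy => by
        have hy' : |y| ≤ |x| + 1 := by
          have := mem_ball_zero_iff.mp hy
          rw [Real.norm_eq_abs] at this
          linarith
        simpa [abs_mul, abs_pow] using bterm_le m (be m) (coeff_be m hm) (fun s => 2 * s + m - 2)
          (fun s => le_trans (Nat.sub_le _ _) (Nat.le_add_right _ 2)) (|x| + 1) y
          (le_add_of_nonneg_left (abs_nonneg x)) hy' s)
      (y₀ := x) (mem_ball_zero_iff.mpr (by rw [Real.norm_eq_abs]; linarith [abs_nonneg x]))
      (bsum m (bd m) (coeff_bd m hm) (fun s => 2 * s + m - 1)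
        (fun s => le_trans (Nat.sub_le _ _) (Nat.le_add_right _ 2)) x)
      (y := x) (mem_ball_zero_iff.mpr (by rw [Real.norm_eq_abs]; linarith [abs_nonneg x]))
    exact h
  exact key

lemma cont_bF (m : ℕ) (hm : 1 ≤ m) : Continuous (bF m) :=
  continuous_iff_continuousAt.mpr fun x => (hasDerivAt_bF m hm x).continuousAt

lemma cont_bF1 (m : ℕ) (hm : 1 ≤ m) : Continuous (bF1 m) :=
  continuous_iff_continuousAt.mpr fun x => (hasDerivAt_bF1 m hm x).continuousAt


lemma bc_rec (m s : ℕ) : bc m (s+1) * ((4*(s+1)*(s+1+m) : ℕ) : ℝ) = - bc m s := by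
  unfold bc
  have h1 : (s+1).factorial = (s+1) * s.factorial := Nat.factorial_succ s
  have h2 : (m + (s+1)).factorial = (m+s+1) * (m+s).factorial := by
    rw [← Nat.add_assoc]
    exact Nat.factorial_succ (m+s)
  have h3 : 2*(s+1)+m = (2*s+m)+2 := by omega
  rw [h1, h2, h3]
  have hs : ((s.factorial : ℕ):ℝ) ≠ 0 := Nat.cast_ne_zero.mpr s.factorial_ne_zero
  have hms : (((m+s).factorial : ℕ):ℝ) ≠ 0 := Nat.cast_ne_zero.mpr (m+s).factorial_ne_zero
  have h2p : ((2:ℝ)) ^ (2*s+m) ≠ 0 := by positivity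
  simp only [pow_succ, pow_add]
  push_cast
  field_simp
  ring

lemma nat_sq (m s : ℕ) : 4*s*(s+m) ≤ (2*s+m)^2 := by nlinarith

lemma key_coeff (m : ℕ) (hm : 1 ≤ m) (s : ℕ) :
    be m s + bd m s - (m:ℝ)^2 * bc m s = bc m s * ((4*s*(s+m) : ℕ):ℝ) := by
  unfold be bd
  have h1 : ((2*s+m-1 : ℕ):ℝ) = ((2*s+m : ℕ):ℝ) - 1 := by
    have h : 1 ≤ 2*s+m := by omega
    rw [Nat.cast_sub h]
    simp
  rw [h1]
  push_cast
  ring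

lemma bode (m : ℕ) (hm : 1 ≤ m) (x : ℝ) :
    x^2 * bF2 m x + x * bF1 m x + (x^2 - (m:ℝ)^2) * bF m x = 0 := by
  have hCbe : ∀ s, |be m s| ≤ |bc m s| * ((2 * s + m : ℕ) : ℝ) ^ 2 := coeff_be m hm
  have hCbd : ∀ s, |bd m s| ≤ |bc m s| * ((2 * s + m : ℕ) : ℝ) ^ 2 := coeff_bd m hm
  have hCbc : ∀ s, |bc m s| ≤ |bc m s| * ((2 * s + m : ℕ) : ℝ) ^ 2 := coeff_bc m hm
  have hCA : ∀ s, |bc m s * ((4*s*(s+m) : ℕ):ℝ)| ≤ |bc m s| * ((2 * s + m : ℕ) : ℝ) ^ 2 := by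
    intro s
    rw [abs_mul, Nat.abs_cast]
    apply mul_le_mul_of_nonneg_left _ (abs_nonneg _)
    have := nat_sq m s
    calc ((4*s*(s+m) : ℕ):ℝ) ≤ (((2*s+m)^2 : ℕ):ℝ) := by exact_mod_cast this
    _ = ((2*s+m : ℕ):ℝ)^2 := by push_cast; ring
  have Sbe : Summable (fun s => be m s * x ^ (2*s+m)) :=
    bsum m (be m) hCbe (fun s => 2*s+m) (fun s => Nat.le_add_right _ 2) x
  have Sbd : Summable (fun s => bd m s * x ^ (2*s+m)) :=
    bsum m (bd m) hCbd (fun s => 2*s+m) (fun s => Nat.le_add_right _ 2) x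
  have Sbc : Summable (fun s => bc m s * x ^ (2*s+m)) :=
    bsum m (bc m) hCbc (fun s => 2*s+m) (fun s => Nat.le_add_right _ 2) x
  have SA : Summable (fun s => (bc m s * ((4*s*(s+m) : ℕ):ℝ)) * x ^ (2*s+m)) :=
    bsum m _ hCA (fun s => 2*s+m) (fun s => Nat.le_add_right _ 2) x
  have SB : Summable (fun s => bc m s * x ^ (2*s+m+2)) :=
    bsum m (bc m) hCbc (fun s => 2*s+m+2) (fun s => le_refl _) x
  have e2 : x^2 * bF2 m x = ∑' s, be m s * x ^ (2*s+m) := by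
    unfold bF2
    rw [← tsum_mul_left]
    apply tsum_congr
    intro s
    rcases le_or_gt 2 (2*s+m) with h | h
    · have h' : 2*s+m-2+2 = 2*s+m := by omega
      calc x^2 * (be m s * x^(2*s+m-2)) = be m s * (x^(2*s+m-2) * x^2) := by ring
      _ = be m s * x^(2*s+m) := by rw [← pow_add, h']
    · have hs : s = 0 := by omega
      have hm1 : m = 1 := by omega
      subst hs; subst hm1
      show x ^ 2 * (be 1 0 * x ^ (2 * 0 + 1 - 2)) = be 1 0 * x ^ (2 * 0 + 1)
      have : be 1 0 = 0 := by
        unfold be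
        norm_num
      simp [this]
  have e1 : x * bF1 m x = ∑' s, bd m s * x ^ (2*s+m) := by
    unfold bF1
    rw [← tsum_mul_left]
    apply tsum_congr
    intro s
    have h' : 2*s+m-1+1 = 2*s+m := by omega
    calc x * (bd m s * x^(2*s+m-1)) = bd m s * (x^(2*s+m-1) * x^1) := by ring
    _ = bd m s * x^(2*s+m) := by rw [← pow_add, h']
  have e0 : x^2 * bF m x = ∑' s, bc m s * x ^ (2*s+m+2) := by
    unfold bF
    rw [← tsum_mul_left]
    apply tsum_congr
    intro s
    calc x^2 * (bc m s * x^(2*s+m)) = bc m s * (x^(2*s+m) * x^2) := by ring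
    _ = bc m s * x^(2*s+m+2) := by rw [← pow_add]
  have em : (m:ℝ)^2 * bF m x = ∑' s, (m:ℝ)^2 * (bc m s * x ^ (2*s+m)) := by
    unfold bF
    rw [← tsum_mul_left]
  have sub1 : (x^2 - (m:ℝ)^2) * bF m x = x^2 * bF m x - (m:ℝ)^2 * bF m x := by ring
  rw [sub1, e2, e1, e0, em]
  have comb : (∑' s, be m s * x ^ (2*s+m)) + (∑' s, bd m s * x ^ (2*s+m))
      - (∑' s, (m:ℝ)^2 * (bc m s * x ^ (2*s+m)))
      = ∑' s, (bc m s * ((4*s*(s+m) : ℕ):ℝ)) * x ^ (2*s+m) := by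
    rw [← Sbe.tsum_add Sbd, ← Summable.tsum_sub (Sbe.add Sbd) (Sbc.mul_left ((m:ℝ)^2))]
    apply tsum_congr
    intro s
    have := key_coeff m hm s
    calc be m s * x ^ (2*s+m) + bd m s * x ^ (2*s+m) - (m:ℝ)^2 * (bc m s * x ^ (2*s+m))
        = (be m s + bd m s - (m:ℝ)^2 * bc m s) * x ^ (2*s+m) := by ring
    _ = (bc m s * ((4*s*(s+m) : ℕ):ℝ)) * x ^ (2*s+m) := by rw [this]
  have final : (∑' s, (bc m s * ((4*s*(s+m) : ℕ):ℝ)) * x ^ (2*s+m))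
      + (∑' s, bc m s * x ^ (2*s+m+2)) = 0 := by
    have hA0 : (bc m 0 * ((4*0*(0+m) : ℕ):ℝ)) * x ^ (2*0+m) = 0 := by norm_num
    have hrec : ∀ s, (bc m (s+1) * ((4*(s+1)*((s+1)+m) : ℕ):ℝ)) * x ^ (2*(s+1)+m)
        = - (bc m s * x ^ (2*s+m+2)) := by
      intro s
      have h' : 2*(s+1)+m = 2*s+m+2 := by omega
      rw [h', bc_rec m s]
      ring
    rw [SA.tsum_eq_zero_add, hA0, zero_add]
    have : (∑' s, (bc m (s+1) * ((4*(s+1)*((s+1)+m) : ℕ):ℝ)) * x ^ (2*(s+1)+m))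
        = ∑' s, - (bc m s * x ^ (2*s+m+2)) := tsum_congr hrec
    rw [this, tsum_neg]
    ring
  linarith [comb, final]


lemma besselJ_eq (m : ℕ) (x : ℝ) : besselJ m x = bF m x := by
  unfold besselJ bF
  apply tsum_congr
  intro s
  have h1 : ((m:ℝ) + (s:ℝ) + 1) = ((m + s : ℕ) : ℝ) + 1 := by push_cast; ring
  rw [h1, Real.Gamma_nat_eq_factorial]
  have h2 : (2 * (s:ℝ) + (m:ℝ)) = ((2 * s + m : ℕ) : ℝ) := by push_cast; ring
  rw [h2, Real.rpow_natCast, div_pow]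
  unfold bc
  have hs : ((s.factorial : ℕ) : ℝ) ≠ 0 := Nat.cast_ne_zero.mpr s.factorial_ne_zero
  have hms : (((m + s).factorial : ℕ) : ℝ) ≠ 0 := Nat.cast_ne_zero.mpr (m + s).factorial_ne_zero
  have h2p : ((2:ℝ)) ^ (2 * s + m) ≠ 0 := by positivity
  field_simp

lemma besselJ_fun_eq (m : ℕ) : besselJ (m:ℝ) = bF m := funext (besselJ_eq m)

lemma besselJ_deriv (m : ℕ) (hm : 1 ≤ m) (x : ℝ) :
    deriv (besselJ (m:ℝ)) x = bF1 m x := by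
  rw [besselJ_fun_eq m, (hasDerivAt_bF m hm x).deriv]

lemma bF_vanish (m : ℕ) (hm : 1 ≤ m) (lo hi : ℝ) (hlo : 0 < lo) {z : ℝ}
    (hz : z ∈ Ioo lo hi) (hFz : bF m z = 0) (hF1z : bF1 m z = 0) :
    ∀ t ∈ Icc lo hi, bF m t = 0 := by
  classical
  set τ : ℝ → ℝ := fun t => max lo (min t hi) with hτ
  have hτ_lo : ∀ t, lo ≤ τ t := fun t => le_max_left _ _
  have hτ_pos : ∀ t, 0 < τ t := fun t => lt_of_lt_of_le hlo (hτ_lo t)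
  set v : ℝ → ℝ × ℝ → ℝ × ℝ :=
    fun t p => (p.2, ((m:ℝ)^2 / (τ t)^2 - 1) * p.1 - p.2 / τ t) with hv_def
  set Kr : ℝ := 1 + ((m:ℝ)^2 / lo^2 + 1) + 1 / lo with hKr
  have hKr1 : 1 ≤ Kr := by
    rw [hKr]
    have h1 : 0 ≤ (m:ℝ)^2 / lo^2 := by positivity
    have h2 : 0 ≤ 1 / lo := by positivity
    linarith
  have hKr0 : 0 ≤ Kr := le_trans zero_le_one hKr1
  have hlip : ∀ t, LipschitzOnWith Kr.toNNReal (v t) univ := by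
    intro t
    apply LipschitzWith.lipschitzOnWith
    apply LipschitzWith.of_dist_le_mul
    intro p q
    have hτt := hτ_pos t
    have hτlo := hτ_lo t
    set α : ℝ := (m:ℝ)^2 / (τ t)^2 - 1 with hα
    have hαb : |α| ≤ (m:ℝ)^2 / lo^2 + 1 := by
      have h1 : 0 ≤ (m:ℝ)^2 / (τ t)^2 := by positivity
      have h2 : (m:ℝ)^2 / (τ t)^2 ≤ (m:ℝ)^2 / lo^2 := by
        apply div_le_div_of_nonneg_left (by positivity) (by positivity)
        nlinarith
      rw [abs_le]
      constructor <;> [linarith; linarith]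
    have hβb : 1 / τ t ≤ 1 / lo := one_div_le_one_div_of_le hlo hτlo
    have hβ0 : 0 < 1 / τ t := by positivity
    rw [Prod.dist_eq, Prod.dist_eq]
    set D := max (dist p.1 q.1) (dist p.2 q.2) with hD
    have hD0 : 0 ≤ D := le_trans dist_nonneg (le_max_left _ _)
    have hd1 : dist p.1 q.1 ≤ D := le_max_left _ _
    have hd2 : dist p.2 q.2 ≤ D := le_max_right _ _
    rw [Real.coe_toNNReal _ hKr0]
    apply max_le
    · calc dist (v t p).1 (v t q).1 = dist p.2 q.2 := rfl
      _ ≤ D := hd2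
      _ ≤ Kr * D := by nlinarith [hKr1, hD0]
    · have : dist (v t p).2 (v t q).2 = |α * (p.1 - q.1) - (p.2 - q.2) / τ t| := by
        rw [Real.dist_eq]
        show |(α * p.1 - p.2 / τ t) - (α * q.1 - q.2 / τ t)| = _
        congr 1
        ring
      rw [this]
      have habs : |α * (p.1 - q.1) - (p.2 - q.2) / τ t|
          ≤ |α| * |p.1 - q.1| + |p.2 - q.2| / τ t := by
        calc |α * (p.1 - q.1) - (p.2 - q.2) / τ t|
            ≤ |α * (p.1 - q.1)| + |(p.2 - q.2) / τ t| := abs_sub _ _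
        _ = |α| * |p.1 - q.1| + |p.2 - q.2| / τ t := by
            rw [abs_mul, abs_div, abs_of_pos hτt]
      have e1 : |p.1 - q.1| = dist p.1 q.1 := (Real.dist_eq _ _).symm
      have e2 : |p.2 - q.2| = dist p.2 q.2 := (Real.dist_eq _ _).symm
      rw [e1, e2] at habs
      have hα0 : 0 ≤ |α| := abs_nonneg _
      calc |α * (p.1 - q.1) - (p.2 - q.2) / τ t| ≤ |α| * dist p.1 q.1 + dist p.2 q.2 / τ t :=
        habs
      _ ≤ ((m:ℝ)^2 / lo^2 + 1) * D + D * (1 / lo) := by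
          have t1 : |α| * dist p.1 q.1 ≤ ((m:ℝ)^2 / lo^2 + 1) * D :=
            mul_le_mul hαb hd1 dist_nonneg (by positivity)
          have t2 : dist p.2 q.2 / τ t ≤ D * (1 / lo) := by
            rw [div_eq_mul_one_div]
            exact mul_le_mul hd2 hβb (le_of_lt hβ0) hD0
          linarith
      _ ≤ Kr * D := by rw [hKr]; nlinarith
  have hmain := ODE_solution_unique_of_mem_Icc (v := v) (s := fun _ => (univ : Set (ℝ × ℝ)))
    (K := Kr.toNNReal) (f := fun t => (bF m t, bF1 m t)) (g := fun _ => ((0:ℝ), (0:ℝ)))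
    (a := lo) (b := hi) (t₀ := z) (fun t _ => hlip t) hz
    (((cont_bF m hm).prodMk (cont_bF1 m hm)).continuousOn)
    (fun t ht => by
      have htpos : 0 < t := lt_trans hlo ht.1
      have hτt : τ t = t := by
        rw [hτ]
        simp only [max_eq_right, min_eq_left]
        rw [min_eq_left (le_of_lt ht.2), max_eq_right (le_of_lt ht.1)]
      have hODE := bode m hm t
      have hder := (hasDerivAt_bF m hm t).prodMk (hasDerivAt_bF1 m hm t)
      have heq : v t ((bF m t, bF1 m t)) = (bF1 m t, bF2 m t) := by
        rw [hv_def]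
        simp only [hτt]
        congr 1
        have ht2 : t^2 ≠ 0 := by positivity
        have htne : t ≠ 0 := ne_of_gt htpos
        field_simp
        nlinarith [hODE]
      rw [heq]
      exact hder)
    (fun t _ => mem_univ _)
    continuousOn_const
    (fun t ht => by
      have : v t ((0:ℝ), (0:ℝ)) = ((0:ℝ), (0:ℝ)) := by
        rw [hv_def]
        simp
      rw [this]
      exact hasDerivAt_const _ _)
    (fun t _ => mem_univ _)
    (by simp [hFz, hF1z])
  intro t ht
  have := hmain ht
  exact congrArg Prod.fst this


lemma right_nonneg {f : ℝ → ℝ} {x y d : ℝ} (hxy : x < y) (hd : HasDerivAt f d x)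
    (h0 : f x = 0) (hpos : ∀ t ∈ Ioo x y, 0 < f t) : 0 ≤ d := by
  by_contra h
  push_neg at h
  have hs := hasDerivAt_iff_tendsto_slope.mp hd
  have hmono : nhdsWithin x (Ioi x) ≤ nhdsWithin x {x}ᶜ :=
    nhdsWithin_mono x (fun t ht => ne_of_gt ht)
  have h1 : ∀ᶠ t in nhdsWithin x (Ioi x), slope f x t < 0 :=
    (hs.mono_left hmono).eventually_lt_const h
  have h2 : Ioo x y ∈ nhdsWithin x (Ioi x) := Ioo_mem_nhdsGT hxy
  obtain ⟨t, hts, htIoo⟩ := (h1.and (Filter.eventually_of_mem h2 (fun t ht => ht))).exists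
  have hfpos := hpos t htIoo
  have hslope : slope f x t = f t / (t - x) := by rw [slope_def_field, h0, sub_zero]
  rw [hslope] at hts
  have hx' : 0 < t - x := sub_pos.mpr htIoo.1
  have : 0 < f t / (t - x) := div_pos hfpos hx'
  linarith

lemma left_nonpos {f : ℝ → ℝ} {w x d : ℝ} (hwx : w < x) (hd : HasDerivAt f d x)
    (h0 : f x = 0) (hpos : ∀ t ∈ Ioo w x, 0 < f t) : d ≤ 0 := by
  by_contra h
  push_neg at h
  have hs := hasDerivAt_iff_tendsto_slope.mp hd
  have hmono : nhdsWithin x (Iio x) ≤ nhdsWithin x {x}ᶜ :=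
    nhdsWithin_mono x (fun t ht => ne_of_lt ht)
  have h1 : ∀ᶠ t in nhdsWithin x (Iio x), 0 < slope f x t :=
    (hs.mono_left hmono).eventually_const_lt h
  have h2 : Ioo w x ∈ nhdsWithin x (Iio x) := Ioo_mem_nhdsLT hwx
  obtain ⟨t, hts, htIoo⟩ := (h1.and (Filter.eventually_of_mem h2 (fun t ht => ht))).exists
  have hfpos := hpos t htIoo
  have hslope : slope f x t = f t / (t - x) := by rw [slope_def_field, h0, sub_zero]
  rw [hslope] at hts
  have hx' : t - x < 0 := sub_neg.mpr htIoo.2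
  have : f t / (t - x) < 0 := div_neg_of_pos_of_neg hfpos hx'
  linarith

/-- Existence of a root of the two-dimensional transmission-eigenvalue characteristic
function `f(k) = J_m(kn/√σ)·J_m'(k) − √σ·n·J_m'(kn/√σ)·J_m(k)` in the interval
`(√σ·a/n, √σ·b/n)`, where `a < b` are consecutive positive zeros of `J_m` and `√σ·b/n`
lies below the first positive zero of `J_m`. -/
theorem characteristic_root_2d_constant
    (σ n : ℝ) (hσ : 0 < σ) (hn : 0 < n) (hns : Real.sqrt σ < n)
    (m : ℕ) (hm : 1 ≤ m)
    (a b : ℝ) (ha : 0 < a) (hab : a < b)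
    (hJa : besselJ m a = 0) (hJb : besselJ m b = 0)
    (hJab : ∀ r ∈ Ioo a b, besselJ m r ≠ 0)
    (hpos : ∀ r ∈ Ioc 0 (Real.sqrt σ * b / n), 0 < besselJ m r) :
    ∃ k ∈ Ioo (Real.sqrt σ * a / n) (Real.sqrt σ * b / n),
      besselJ m (k * n / Real.sqrt σ) * deriv (besselJ m) k
        - Real.sqrt σ * n * deriv (besselJ m) (k * n / Real.sqrt σ) * besselJ m k = 0 := by
  have hs0 : 0 < Real.sqrt σ := Real.sqrt_pos.mpr hσ
  have hA0 : 0 < Real.sqrt σ * a / n := div_pos (mul_pos hs0 ha) hn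
  have hB0 : 0 < Real.sqrt σ * b / n := div_pos (mul_pos hs0 (lt_trans ha hab)) hn
  have hAB : Real.sqrt σ * a / n < Real.sqrt σ * b / n := by gcongr
  set A := Real.sqrt σ * a / n with hA_def
  set B := Real.sqrt σ * b / n with hB_def
  have hfun : besselJ (m:ℝ) = bF m := besselJ_fun_eq m
  rw [hfun] at hJa hJb hJab hpos
  have hFa : bF m a = 0 := hJa
  have hFb : bF m b = 0 := hJb
  -- bF1 nonzero at a and b
  have hF1a : bF1 m a ≠ 0 := by
    intro h
    have hm₁ : (a + b) / 2 ∈ Ioo a b := ⟨by linarith, by linarith⟩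
    have hv := bF_vanish m hm (a / 2) ((a + b) / 2) (by positivity)
      (z := a) ⟨by linarith, hm₁.1⟩ hFa h ((a + b) / 2) ⟨by linarith, le_refl _⟩
    exact hJab _ hm₁ hv
  have hF1b : bF1 m b ≠ 0 := by
    intro h
    have hm₁ : (a + b) / 2 ∈ Ioo a b := ⟨by linarith, by linarith⟩
    have hv := bF_vanish m hm ((a + b) / 2) (b + 1) (by linarith)
      (z := b) ⟨hm₁.2, by linarith⟩ hFb h ((a + b) / 2) ⟨le_refl _, by linarith⟩
    exact hJab _ hm₁ hv
  -- constant sign on (a,b)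
  have hsign : (∀ r ∈ Ioo a b, 0 < bF m r) ∨ (∀ r ∈ Ioo a b, bF m r < 0) := by
    by_contra hcon
    push_neg at hcon
    obtain ⟨⟨r₁, hr₁, hr₁le⟩, ⟨r₂, hr₂, hr₂ge⟩⟩ := hcon
    have h1 : bF m r₁ < 0 := lt_of_le_of_ne hr₁le (hJab r₁ hr₁)
    have h2 : 0 < bF m r₂ := lt_of_le_of_ne hr₂ge (Ne.symm (hJab r₂ hr₂))
    rcases lt_trichotomy r₁ r₂ with h | h | h
    · obtain ⟨t, htIoo, hft⟩ := intermediate_value_Ioo (le_of_lt h)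
        (cont_bF m hm).continuousOn (show (0:ℝ) ∈ Ioo (bF m r₁) (bF m r₂) from ⟨h1, h2⟩)
      exact hJab t ⟨lt_trans hr₁.1 htIoo.1, lt_trans htIoo.2 hr₂.2⟩ hft
    · rw [h] at h1; linarith
    · obtain ⟨t, htIoo, hft⟩ := intermediate_value_Ioo' (le_of_lt h)
        (cont_bF m hm).continuousOn (show (0:ℝ) ∈ Ioo (bF m r₁) (bF m r₂) from ⟨h1, h2⟩)
      exact hJab t ⟨lt_trans hr₂.1 htIoo.1, lt_trans htIoo.2 hr₁.2⟩ hft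
  -- the characteristic function
  set φ : ℝ → ℝ := fun k => bF m (k * n / Real.sqrt σ) * bF1 m k
    - Real.sqrt σ * n * bF1 m (k * n / Real.sqrt σ) * bF m k with hφ_def
  have hφcont : Continuous φ := by
    have harg : Continuous (fun k : ℝ => k * n / Real.sqrt σ) := by continuity
    exact (((cont_bF m hm).comp harg).mul (cont_bF1 m hm)).sub
      ((continuous_const.mul ((cont_bF1 m hm).comp harg)).mul (cont_bF m hm))
  have hnne : n ≠ 0 := ne_of_gt hn
  have hsne : Real.sqrt σ ≠ 0 := ne_of_gt hs0
  have hAa : A * n / Real.sqrt σ = a := by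
    rw [hA_def]; field_simp
  have hBb : B * n / Real.sqrt σ = b := by
    rw [hB_def]; field_simp
  have hφA : φ A = -(Real.sqrt σ * n * bF1 m a * bF m A) := by
    rw [hφ_def]; simp only [hAa, hFa]; ring
  have hφB : φ B = -(Real.sqrt σ * n * bF1 m b * bF m B) := by
    rw [hφ_def]; simp only [hBb, hFb]; ring
  have hFA : 0 < bF m A := hpos A ⟨hA0, le_of_lt hAB⟩
  have hFB : 0 < bF m B := hpos B ⟨hB0, le_refl _⟩
  have key : ∃ k ∈ Ioo A B, φ k = 0 := by
    rcases hsign with hp | hneg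
    · have h1a : 0 < bF1 m a :=
        lt_of_le_of_ne (right_nonneg hab (hasDerivAt_bF m hm a) hFa hp) (Ne.symm hF1a)
      have h1b : bF1 m b < 0 :=
        lt_of_le_of_ne (left_nonpos hab (hasDerivAt_bF m hm b) hFb hp) hF1b
      have hφA0 : φ A < 0 := by
        rw [hφA]
        have hh := mul_pos (mul_pos (mul_pos hs0 hn) h1a) hFA
        linarith
      have hφB0 : 0 < φ B := by
        rw [hφB]
        have hh := mul_neg_of_neg_of_pos (mul_neg_of_pos_of_neg (mul_pos hs0 hn) h1b) hFB
        linarith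
      obtain ⟨k, hk, hφk⟩ := intermediate_value_Ioo (le_of_lt hAB) hφcont.continuousOn
        (show (0:ℝ) ∈ Ioo (φ A) (φ B) from ⟨hφA0, hφB0⟩)
      exact ⟨k, hk, hφk⟩
    · have hp' : ∀ t ∈ Ioo a b, 0 < (fun t => -(bF m t)) t := fun t ht => by
        simpa using hneg t ht
      have h1a : bF1 m a < 0 := by
        have := right_nonneg hab (hasDerivAt_bF m hm a).neg (by simpa using hFa) hp'
        rcases lt_or_eq_of_le (by linarith : bF1 m a ≤ 0) with h | h
        · exact h
        · exact absurd h hF1a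
      have h1b : 0 < bF1 m b := by
        have := left_nonpos hab (hasDerivAt_bF m hm b).neg (by simpa using hFb) hp'
        rcases lt_or_eq_of_le (by linarith : 0 ≤ bF1 m b) with h | h
        · exact h
        · exact absurd h.symm hF1b
      have hφA0 : 0 < φ A := by
        rw [hφA]
        have hh := mul_neg_of_neg_of_pos (mul_neg_of_pos_of_neg (mul_pos hs0 hn) h1a) hFA
        linarith
      have hφB0 : φ B < 0 := by
        rw [hφB]
        have hh := mul_pos (mul_pos (mul_pos hs0 hn) h1b) hFB
        linarith
      obtain ⟨k, hk, hφk⟩ := intermediate_value_Ioo' (le_of_lt hAB) hφcont.continuousOn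
        (show (0:ℝ) ∈ Ioo (φ B) (φ A) from ⟨hφB0, hφA0⟩)
      exact ⟨k, hk, hφk⟩
  obtain ⟨k, hk, hφk⟩ := key
  refine ⟨k, hk, ?_⟩
  rw [hfun]
  have hd1 : deriv (bF m) k = bF1 m k := (hasDerivAt_bF m hm k).deriv
  have hd2 : deriv (bF m) (k * n / Real.sqrt σ) = bF1 m (k * n / Real.sqrt σ) :=
    (hasDerivAt_bF m hm _).deriv
  rw [hd1, hd2]
  exact hφk

end
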